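/- Fix a positive integer n. The quotient Z/B is a free ℤ-module, freely generated by the images under the natural surjection Z → Z/B of the monomials [a_1,…,a_k] with k ∈ ℕ and 0 ≤ a_1 < a_2 < ⋯ < a_k ≤ n−1. -/

import Mathlib

/-!
The free non-unital associative ring `Z = ℤ⟨x,y⟩⁺`, realized as the span of the
non-empty monomials inside the free (unital) algebra `W = ℤ⟨x,y⟩`, together with the
`ℤ`-submodule `B` from Section 3 of the paper.
-/

/-- The free unital associative `ℤ`-algebra `W = ℤ⟨x,y⟩` on two generators. -/
abbrev W : Type := FreeAlgebra ℤ (Fin 2)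

/-- The generator `x`. -/
noncomputable def Xg : W := FreeAlgebra.ι ℤ (0 : Fin 2)

/-- The generator `y`. -/
noncomputable def Yg : W := FreeAlgebra.ι ℤ (1 : Fin 2)

/-- `w` is a non-empty monomial (word) in `x, y`, i.e. `w ∈ M`. -/
def IsMonoW (w : W) : Prop :=
  ∃ l : List (Fin 2), l ≠ [] ∧ w = (l.map (FreeAlgebra.ι ℤ)).prod

/-- `Z = ℤ⟨x,y⟩⁺`, the free non-unital associative ring on `x, y`: the `ℤ`-span of the
non-empty monomials inside `W`. -/
noncomputable def Zsub : Submodule ℤ W := Submodule.span ℤ {w | IsMonoW w}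

/-- `[a_1,…,a_k] = x^{a_1} y x^{a_2} y ⋯ y x^{a_k}` (for `k = 0` this is `1`). -/
noncomputable def br {k : ℕ} (a : Fin k → ℕ) : W :=
  (List.intersperse Yg (List.ofFn fun i => Xg ^ (a i))).prod

/-- The `ℤ`-submodule `B` of `Z`: it is generated by the monomials `[a_1,…,a_k]`
(`k ≥ 1`) such that `a_i ≥ n` for some `i`, or `a_i = a_j` for some `i ≠ j`, together
with the elements `[a_1,…,a_k] + [a_1,…,a_k]^{(ij)}` for transpositions `(ij)`,
`i ≠ j`. -/
noncomputable def Bsub (n : ℕ) : Submodule ℤ W :=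
  Submodule.span ℤ
    ({w | ∃ (k : ℕ) (a : Fin k → ℕ), 0 < k ∧
        ((∃ i, n ≤ a i) ∨ ∃ i j : Fin k, i ≠ j ∧ a i = a j) ∧ w = br a} ∪
      {w | ∃ (k : ℕ) (a : Fin k → ℕ) (i j : Fin k), i ≠ j ∧
        w = br a + br (a ∘ Equiv.swap i j)})

/-- The index set of the monomials `[a_1,…,a_k]`, `k ≥ 1`, `0 ≤ a_1 < a_2 < ⋯ < a_k ≤ n−1`
(excluding the degenerate empty word `[0] = x^0`, which does not belong to the
non-unital ring `Z`). -/
def HatIdx (n : ℕ) : Type :=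
  {p : Σ k : ℕ, Fin k → ℕ // 0 < p.1 ∧ StrictMono p.2 ∧ (∀ i, p.2 i < n) ∧
    (1 < p.1 ∨ ∃ i, 0 < p.2 i)}

noncomputable section FermMod

abbrev FM : Type := List ℕ →₀ ℤ

def cmapF (h : ℕ) : FM →ₗ[ℤ] FM := Finsupp.lmapDomain ℤ ℤ (List.cons h)

lemma cmapF_single (h : ℕ) (m : List ℕ) (c : ℤ) :
    cmapF h (Finsupp.single m c) = Finsupp.single (h :: m) c := by
  simp [cmapF, Finsupp.mapDomain_single]

def insF (x : ℕ) : List ℕ → FM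
  | [] => Finsupp.single [x] 1
  | h :: s =>
    if x < h then Finsupp.single (x :: h :: s) 1
    else if x = h then 0 else - cmapF h (insF x s)

def InsF (x : ℕ) : FM →ₗ[ℤ] FM := Finsupp.linearCombination ℤ (insF x)

lemma InsF_single (x : ℕ) (m : List ℕ) (c : ℤ) :
    InsF x (Finsupp.single m c) = c • insF x m := by
  simp [InsF]

lemma InsF_comp_cmapF_lt {x h : ℕ} (hx : x < h) :
    (InsF x) ∘ₗ (cmapF h) = (cmapF x) ∘ₗ (cmapF h) := by
  apply Finsupp.lhom_ext; intro m c
  simp [cmapF_single, InsF_single, insF, hx, Finsupp.smul_single]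

lemma InsF_comp_cmapF_self (x : ℕ) : (InsF x) ∘ₗ (cmapF x) = 0 := by
  apply Finsupp.lhom_ext; intro m c
  simp [cmapF_single, InsF_single, insF]

lemma InsF_comp_cmapF_gt {x h : ℕ} (hx : h < x) :
    (InsF x) ∘ₗ (cmapF h) = - ((cmapF h) ∘ₗ (InsF x)) := by
  apply Finsupp.lhom_ext; intro m c
  have h1 : ¬ x < h := by omega
  have h2 : x ≠ h := by omega
  simp [cmapF_single, InsF_single, insF, h1, h2, smul_neg, map_smul]

lemma InsF_insF_self (x : ℕ) : ∀ m : List ℕ, InsF x (insF x m) = 0 := by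
  intro m
  induction m with
  | nil =>
      simp [insF, InsF_single]
  | cons h s ih =>
      rcases lt_trichotomy x h with hlt | heq | hgt
      · have h2 : x ≠ h := by omega
        simp [insF, hlt, InsF_single, lt_irrefl]
      · simp [insF, heq, lt_irrefl]
      · have h1 : ¬ x < h := by omega
        have h2 : x ≠ h := by omega
        have hc := LinearMap.congr_fun (InsF_comp_cmapF_gt hgt) (insF x s)
        simp only [LinearMap.comp_apply, LinearMap.neg_apply] at hc
        simp [insF, h1, h2, map_neg, hc, ih]


lemma insF_lt {x h : ℕ} (hx : x < h) (s : List ℕ) :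
    insF x (h :: s) = Finsupp.single (x :: h :: s) 1 := by
  simp [insF, hx]

lemma insF_self (x : ℕ) (s : List ℕ) : insF x (x :: s) = 0 := by
  simp [insF]

lemma insF_gt {x h : ℕ} (hx : h < x) (s : List ℕ) :
    insF x (h :: s) = - cmapF h (insF x s) := by
  rw [insF, if_neg (by omega), if_neg (by omega)]

lemma InsF_cmapF_lt {x h : ℕ} (hx : x < h) (v : FM) :
    InsF x (cmapF h v) = cmapF x (cmapF h v) := LinearMap.congr_fun (InsF_comp_cmapF_lt hx) v

lemma InsF_cmapF_self (x : ℕ) (v : FM) : InsF x (cmapF x v) = 0 :=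
  LinearMap.congr_fun (InsF_comp_cmapF_self x) v

lemma InsF_cmapF_gt {x h : ℕ} (hx : h < x) (v : FM) :
    InsF x (cmapF h v) = - cmapF h (InsF x v) := LinearMap.congr_fun (InsF_comp_cmapF_gt hx) v

lemma InsF_anticomm_aux {x y : ℕ} (hxy : x < y) :
    ∀ m : List ℕ, InsF x (insF y m) + InsF y (insF x m) = 0 := by
  intro m
  induction m with
  | nil =>
      rw [insF, insF, InsF_single, InsF_single, one_smul, one_smul, insF_lt hxy,
        insF_gt hxy, insF, cmapF_single]
      simp
  | cons h s ih =>
      rcases lt_trichotomy y h with hyh | hyh | hyh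
      · -- x < y < h
        have hxh : x < h := by omega
        rw [insF_lt hyh, insF_lt hxh, InsF_single, InsF_single, one_smul, one_smul,
          insF_lt (show x < y by omega), insF_gt hxy, insF_lt hyh, cmapF_single]
        simp
      · -- y = h
        subst hyh
        rw [insF_self, insF_lt hxy, InsF_single, one_smul, insF_gt hxy, insF_self,
          map_zero, map_zero]
        simp
      · -- h < y
        rcases lt_trichotomy x h with hxh | hxh | hxh
        · -- x < h < y
          rw [insF_gt hyh, insF_lt hxh, map_neg, InsF_cmapF_lt hxh, InsF_single, one_smul,
            insF_gt hxy, insF_gt hyh, map_neg]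
          simp
        · -- x = h
          subst hxh
          rw [insF_gt hyh, insF_self, map_neg, InsF_cmapF_self, map_zero]
          simp
        · -- h < x < y
          rw [insF_gt hyh, insF_gt hxh, map_neg, map_neg, InsF_cmapF_gt hxh,
            InsF_cmapF_gt (show h < y by omega)]
          rw [neg_neg, neg_neg, ← map_add, ih, map_zero]

lemma InsF_comp_self (x : ℕ) : InsF x ∘ₗ InsF x = 0 := by
  apply Finsupp.lhom_ext; intro m c
  simp [InsF_single, map_smul, InsF_insF_self]

lemma InsF_comp_anticomm (x y : ℕ) : InsF x ∘ₗ InsF y + InsF y ∘ₗ InsF x = 0 := by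
  rcases lt_trichotomy x y with h | h | h
  · apply Finsupp.lhom_ext; intro m c
    simp only [LinearMap.add_apply, LinearMap.comp_apply, InsF_single, map_smul,
      LinearMap.zero_apply, ← smul_add]
    rw [InsF_anticomm_aux h m, smul_zero]
  · subst h
    rw [InsF_comp_self, add_zero]
  · apply Finsupp.lhom_ext; intro m c
    simp only [LinearMap.add_apply, LinearMap.comp_apply, InsF_single, map_smul,
      LinearMap.zero_apply, ← smul_add]
    rw [add_comm, InsF_anticomm_aux h m, smul_zero]

variable (n : ℕ)

def Jop (x : ℕ) : FM →ₗ[ℤ] FM := if x < n then InsF x else 0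

lemma Jop_comp_self (x : ℕ) : Jop n x ∘ₗ Jop n x = 0 := by
  unfold Jop; split
  · exact InsF_comp_self x
  · simp

lemma Jop_anticomm (x y : ℕ) : Jop n x ∘ₗ Jop n y = - (Jop n y ∘ₗ Jop n x) := by
  unfold Jop
  split <;> split
  · exact eq_neg_of_add_eq_zero_left (InsF_comp_anticomm x y)
  · simp
  · simp
  · simp

def Gop : List ℕ → (FM →ₗ[ℤ] FM)
  | [] => LinearMap.id
  | x :: t => Jop n x ∘ₗ Gop t

lemma Gop_append : ∀ p q : List ℕ, Gop n (p ++ q) = Gop n p ∘ₗ Gop n q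
  | [], q => by simp [Gop]
  | x :: t, q => by
      show Jop n x ∘ₗ Gop n (t ++ q) = _
      rw [Gop_append t q]
      rfl

def VF (l : List ℕ) : FM := Gop n l (Finsupp.single [] 1)

lemma VF_adjswap (p : List ℕ) (x y : ℕ) (m : List ℕ) :
    VF n (p ++ x :: y :: m) = - VF n (p ++ y :: x :: m) := by
  unfold VF
  rw [Gop_append, Gop_append]
  show (Gop n p) ((Gop n (x :: y :: m)) _) = -(Gop n p) ((Gop n (y :: x :: m)) _)
  rw [← map_neg]
  congr 1
  show (Jop n x ∘ₗ (Jop n y ∘ₗ Gop n m)) _ = _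
  rw [← LinearMap.comp_assoc, Jop_anticomm]
  simp [Gop]

lemma VF_dup : ∀ (s p : List ℕ) (x : ℕ) (r : List ℕ), VF n (p ++ x :: (s ++ x :: r)) = 0
  | [], p, x, r => by
      unfold VF
      rw [List.nil_append, show p ++ x :: x :: r = p ++ [x] ++ ([x] ++ r) by simp,
        Gop_append, Gop_append]
      show (Gop n p) ((Gop n [x] ∘ₗ Gop n [x]) ((Gop n r) _)) = 0
      have : Gop n [x] ∘ₗ Gop n [x] = 0 := by
        simpa [Gop] using Jop_comp_self n x
      rw [this]; simp
  | c :: s', p, x, r => by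
      rw [List.cons_append, VF_adjswap n p x c (s' ++ x :: r), show p ++ c :: x :: (s' ++ x :: r) = (p ++ [c]) ++ x :: (s' ++ x :: r) by simp,
        VF_dup s' (p ++ [c]) x r, neg_zero]

lemma VF_swap : ∀ (q p : List ℕ) (x y : ℕ) (r : List ℕ),
    VF n (p ++ x :: (q ++ y :: r)) = - VF n (p ++ y :: (q ++ x :: r))
  | [], p, x, y, r => by simpa using VF_adjswap n p x y r
  | c :: q', p, x, y, r => by
      rw [List.cons_append, VF_adjswap n p x c (q' ++ y :: r),
        show p ++ c :: x :: (q' ++ y :: r) = (p ++ [c]) ++ x :: (q' ++ y :: r) by simp,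
        VF_swap q' (p ++ [c]) x y r,
        show (p ++ [c]) ++ y :: (q' ++ x :: r) = p ++ c :: y :: (q' ++ x :: r) by simp,
        VF_adjswap n p c y (q' ++ x :: r), List.cons_append]
      simp

lemma VF_not_nodup : ∀ l : List ℕ, ¬ l.Nodup → VF n l = 0 := by
  intro l
  induction l with
  | nil => intro h; exact absurd List.nodup_nil h
  | cons x t ih =>
      intro h
      rw [List.nodup_cons] at h
      push_neg at h
      by_cases hx : x ∈ t
      · obtain ⟨s, r, rfl⟩ := List.append_of_mem hx
        simpa using VF_dup n s [] x r
      · have := ih (h hx)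
        show (Jop n x ∘ₗ Gop n t) _ = 0
        rw [LinearMap.comp_apply]
        change (Jop n x) (VF n t) = 0
        rw [this, map_zero]

lemma VF_mem_ge {x : ℕ} (hx : n ≤ x) : ∀ l : List ℕ, x ∈ l → VF n l = 0 := by
  intro l hl
  obtain ⟨s, r, rfl⟩ := List.append_of_mem hl
  unfold VF
  rw [show s ++ x :: r = s ++ [x] ++ r by simp, Gop_append, Gop_append]
  have : Gop n [x] = 0 := by
    simp [Gop, Jop, Nat.not_lt.2 hx]
  rw [this]
  simp

lemma VF_sorted : ∀ l : List ℕ, l.Pairwise (· < ·) → (∀ y ∈ l, y < n) →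
    VF n l = Finsupp.single l 1
  | [] => fun _ _ => by simp [VF, Gop]
  | x :: t => fun hs hb => by
      have hst : t.Pairwise (· < ·) := hs.of_cons
      have ih := VF_sorted t hst (fun y hy => hb y (List.mem_cons_of_mem _ hy))
      show (Jop n x ∘ₗ Gop n t) _ = _
      rw [LinearMap.comp_apply]
      change (Jop n x) (VF n t) = _
      rw [ih, Jop, if_pos (hb x List.mem_cons_self), InsF_single, one_smul]
      cases t with
      | nil => rw [insF]
      | cons h s =>
          rw [insF_lt (List.rel_of_pairwise_cons hs List.mem_cons_self)]

def wordOf : List ℕ → List (Fin 2)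
  | [] => []
  | [a] => List.replicate a 0
  | a :: b :: t => List.replicate a 0 ++ 1 :: wordOf (b :: t)

def parseW : List (Fin 2) → ℕ × List ℕ
  | [] => (0, [])
  | c :: t =>
    if c = 0 then ((parseW t).1 + 1, (parseW t).2) else (0, (parseW t).1 :: (parseW t).2)

lemma parseW_replicate : ∀ (m : ℕ) (w : List (Fin 2)),
    parseW (List.replicate m 0 ++ w) = ((parseW w).1 + m, (parseW w).2)
  | 0, w => by simp
  | m + 1, w => by
      rw [List.replicate_succ, List.cons_append, parseW, if_pos rfl,
        parseW_replicate m w]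
      simp; omega

lemma parseW_wordOf : ∀ (t : List ℕ) (a : ℕ), parseW (wordOf (a :: t)) = (a, t)
  | [], a => by
      rw [wordOf, show List.replicate a (0 : Fin 2) = List.replicate a 0 ++ [] by simp,
        parseW_replicate]
      simp [parseW]
  | b :: t', a => by
      rw [wordOf, parseW_replicate, parseW, if_neg (by decide), parseW_wordOf t' b]
      simp

lemma wordOf_succ (a : ℕ) (r : List ℕ) : wordOf ((a + 1) :: r) = 0 :: wordOf (a :: r) := by
  cases r <;> simp [wordOf, List.replicate_succ]

lemma wordOf_parseW : ∀ l : List (Fin 2), wordOf ((parseW l).1 :: (parseW l).2) = l := by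
  intro l
  induction l with
  | nil => simp [parseW, wordOf]
  | cons c t ih =>
      have hc : c = 0 ∨ c = 1 := by fin_cases c; exacts [Or.inl rfl, Or.inr rfl]
      rcases hc with rfl | rfl
      · rw [parseW, if_pos rfl, wordOf_succ, ih]
      · rw [parseW, if_neg (by decide)]
        show wordOf (0 :: (parseW t).1 :: (parseW t).2) = _
        rw [wordOf, List.replicate_zero, List.nil_append, ih]

lemma parseW_ne_nil (l : List (Fin 2)) (hl : l ≠ [])
    (h2 : (parseW l).2 = []) : 0 < (parseW l).1 := by
  cases l with
  | nil => exact absurd rfl hl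
  | cons c t =>
      have hc : c = 0 ∨ c = 1 := by fin_cases c; exacts [Or.inl rfl, Or.inr rfl]
      rcases hc with rfl | rfl
      · rw [parseW, if_pos rfl]; omega
      · rw [parseW, if_neg (by decide)] at h2 ⊢
        simp at h2

end FermMod

noncomputable section AlgBridge

/-- `brW L` is `br` for a list. -/
noncomputable def brW (L : List ℕ) : W := (List.intersperse Yg (L.map (Xg ^ ·))).prod

lemma br_eq_brW {k : ℕ} (a : Fin k → ℕ) : br a = brW (List.ofFn a) := by
  unfold br brW
  rw [List.map_ofFn]
  rfl

lemma replicate_prod (m : ℕ) : ((List.replicate m (0 : Fin 2)).map (FreeAlgebra.ι ℤ)).prod = Xg ^ m := by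
  induction m with
  | zero => simp
  | succ m ih => rw [List.replicate_succ, List.map_cons, List.prod_cons, ih, Xg, pow_succ']

lemma brW_word : ∀ L : List ℕ, L ≠ [] → brW L = ((wordOf L).map (FreeAlgebra.ι ℤ)).prod
  | [], h => absurd rfl h
  | [a], _ => by
      rw [wordOf, brW]
      simpa [Xg] using (replicate_prod a).symm
  | a :: b :: t, _ => by
      rw [wordOf, brW, List.map_cons, List.map_cons, List.intersperse_cons_cons,
        List.prod_cons, List.prod_cons, List.map_append, List.prod_append,
        List.map_cons, List.prod_cons, replicate_prod,
        ← brW_word (b :: t) (by simp), brW]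
      show Xg ^ a * (Yg * _) = Xg ^ a * (FreeAlgebra.ι ℤ 1 * _)
      rfl

abbrev eAlg : W ≃ₐ[ℤ] MonoidAlgebra ℤ (FreeMonoid (Fin 2)) :=
  FreeAlgebra.equivMonoidAlgebraFreeMonoid (R := ℤ) (X := Fin 2)

lemma eAlg_iota (c : Fin 2) :
    eAlg (FreeAlgebra.ι ℤ c) = MonoidAlgebra.single (FreeMonoid.of c) 1 := by
  simp [eAlg, FreeAlgebra.equivMonoidAlgebraFreeMonoid, MonoidAlgebra.of_apply]

lemma eAlg_word : ∀ l : List (Fin 2),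
    eAlg ((l.map (FreeAlgebra.ι ℤ)).prod) = MonoidAlgebra.single (FreeMonoid.ofList l) 1
  | [] => by
      simp [MonoidAlgebra.one_def]
  | c :: t => by
      rw [List.map_cons, List.prod_cons, map_mul, eAlg_iota, eAlg_word t,
        MonoidAlgebra.single_mul_single, one_mul, FreeMonoid.ofList_cons]

abbrev bW : Module.Basis (FreeMonoid (Fin 2)) ℤ W := FreeAlgebra.basisFreeMonoid ℤ (Fin 2)

lemma bW_apply (l : List (Fin 2)) :
    bW (FreeMonoid.ofList l) = ((l.map (FreeAlgebra.ι ℤ)).prod) := by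
  have h := eAlg_word l
  have : bW (FreeMonoid.ofList l) = eAlg.symm (MonoidAlgebra.single (FreeMonoid.ofList l) 1) := by
    simp [bW, FreeAlgebra.basisFreeMonoid, Module.Basis.map_apply, Finsupp.basisSingleOne]
    rfl
  rw [this, ← h, AlgEquiv.symm_apply_apply]

/-- the linear functional detecting hat monomials -/
noncomputable def phiF (n : ℕ) : W →ₗ[ℤ] FM :=
  bW.constr ℤ (fun m : FreeMonoid (Fin 2) =>
    VF n ((parseW (FreeMonoid.toList m)).1 :: (parseW (FreeMonoid.toList m)).2))

lemma phiF_word (n : ℕ) (l : List (Fin 2)) :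
    phiF n ((l.map (FreeAlgebra.ι ℤ)).prod) = VF n ((parseW l).1 :: (parseW l).2) := by
  rw [← bW_apply, phiF, Module.Basis.constr_basis]
  rfl

lemma phiF_brW (n : ℕ) : ∀ L : List ℕ, L ≠ [] → phiF n (brW L) = VF n L
  | [], h => absurd rfl h
  | a :: t, _ => by
      rw [brW_word (a :: t) (by simp), phiF_word, parseW_wordOf t a]

lemma phiF_br (n k : ℕ) (hk : 0 < k) (a : Fin k → ℕ) :
    phiF n (br a) = VF n (List.ofFn a) := by
  rw [br_eq_brW, phiF_brW n _ (by simp [List.ofFn_eq_nil_iff]; omega)]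

lemma VF_map_swap_decomp (n k : ℕ) (a : Fin k → ℕ) (i j : Fin k)
    (P Q R : List (Fin k)) (hnd : (P ++ i :: (Q ++ j :: R)).Nodup) :
    VF n ((P ++ i :: (Q ++ j :: R)).map (a ∘ Equiv.swap i j))
      = - VF n ((P ++ i :: (Q ++ j :: R)).map a) := by
  have hP : ∀ x ∈ P, x ≠ i ∧ x ≠ j := by
    intro x hx
    constructor <;> rintro rfl <;>
      simp [List.nodup_append, List.nodup_cons, List.mem_append, List.mem_cons] at hnd <;>
      grind
  have hQ : ∀ x ∈ Q, x ≠ i ∧ x ≠ j := by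
    intro x hx
    constructor <;> rintro rfl <;>
      simp [List.nodup_append, List.nodup_cons, List.mem_append, List.mem_cons] at hnd <;>
      grind
  have hR : ∀ x ∈ R, x ≠ i ∧ x ≠ j := by
    intro x hx
    constructor <;> rintro rfl <;>
      simp [List.nodup_append, List.nodup_cons, List.mem_append, List.mem_cons] at hnd <;>
      tauto
  have mP : P.map (a ∘ Equiv.swap i j) = P.map a :=
    List.map_congr_left fun x hx => by
      simp [Equiv.swap_apply_of_ne_of_ne (hP x hx).1 (hP x hx).2]
  have mQ : Q.map (a ∘ Equiv.swap i j) = Q.map a :=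
    List.map_congr_left fun x hx => by
      simp [Equiv.swap_apply_of_ne_of_ne (hQ x hx).1 (hQ x hx).2]
  have mR : R.map (a ∘ Equiv.swap i j) = R.map a :=
    List.map_congr_left fun x hx => by
      simp [Equiv.swap_apply_of_ne_of_ne (hR x hx).1 (hR x hx).2]
  rw [List.map_append, List.map_cons, List.map_append, List.map_cons,
    List.map_append, List.map_cons, List.map_append, List.map_cons,
    mP, mQ, mR]
  have hvi : (a ∘ Equiv.swap i j) i = a j := by simp
  have hvj : (a ∘ Equiv.swap i j) j = a i := by simp
  rw [hvi, hvj]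
  exact VF_swap n (Q.map a) (P.map a) (a j) (a i) (R.map a)

lemma VF_ofFn_swap (n : ℕ) {k : ℕ} (a : Fin k → ℕ) (i j : Fin k) (hij : i ≠ j) :
    VF n (List.ofFn (a ∘ Equiv.swap i j)) = - VF n (List.ofFn a) := by
  have hnd : (List.finRange k).Nodup := List.nodup_finRange k
  have hi : i ∈ List.finRange k := List.mem_finRange i
  have hj : j ∈ List.finRange k := List.mem_finRange j
  obtain ⟨P, T, hl⟩ := List.append_of_mem hi
  have hjPT : j ∈ P ∨ j ∈ T := by
    rw [hl] at hj
    rcases List.mem_append.1 hj with h | h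
    · exact Or.inl h
    · rcases List.mem_cons.1 h with h | h
      · exact absurd h.symm hij
      · exact Or.inr h
  rw [List.ofFn_eq_map, List.ofFn_eq_map (f := a)]
  rcases hjPT with hjP | hjT
  · obtain ⟨P', Q', hP⟩ := List.append_of_mem hjP
    have hl' : List.finRange k = P' ++ j :: (Q' ++ i :: T) := by
      rw [hl, hP]; simp
    rw [hl']
    rw [show a ∘ Equiv.swap i j = a ∘ Equiv.swap j i by rw [Equiv.swap_comm]]
    exact VF_map_swap_decomp n k a j i P' Q' T (hl' ▸ hnd)
  · obtain ⟨Q, R, hT⟩ := List.append_of_mem hjT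
    have hl' : List.finRange k = P ++ i :: (Q ++ j :: R) := by rw [hl, hT]
    rw [hl']
    exact VF_map_swap_decomp n k a i j P Q R (hl' ▸ hnd)

lemma Bsub_le_ker (n : ℕ) : Bsub n ≤ LinearMap.ker (phiF n) := by
  rw [Bsub, Submodule.span_le]
  rintro w (⟨k, a, hk, hcond, rfl⟩ | ⟨k, a, i, j, hij, rfl⟩)
  · rw [SetLike.mem_coe, LinearMap.mem_ker, phiF_br n k hk a]
    rcases hcond with ⟨i, hi⟩ | ⟨i, j, hij, heq⟩
    · exact VF_mem_ge n hi _ (List.mem_ofFn.2 ⟨i, rfl⟩)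
    · refine VF_not_nodup n _ ?_
      rw [List.nodup_ofFn]
      exact fun hinj => hij (hinj heq)
  · have hk : 0 < k := i.pos
    rw [SetLike.mem_coe, LinearMap.mem_ker, map_add, phiF_br n k hk, phiF_br n k hk,
      VF_ofFn_swap n a i j hij, add_neg_cancel]

lemma br_sub_sign_smul_mem (n : ℕ) {k : ℕ} (π : Equiv.Perm (Fin k)) :
    ∀ a : Fin k → ℕ, br a - ((Equiv.Perm.sign π : ℤˣ) : ℤ) • br (a ∘ ⇑π) ∈ Bsub n := by
  refine Equiv.Perm.swap_induction_on
    (motive := fun σ => ∀ a : Fin k → ℕ,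
      br a - ((Equiv.Perm.sign σ : ℤˣ) : ℤ) • br (a ∘ ⇑σ) ∈ Bsub n) π ?_ ?_
  · intro a
    simp
  · intro f x y hxy ih a
    have hcomp : a ∘ ⇑(Equiv.swap x y * f) = (a ∘ ⇑(Equiv.swap x y)) ∘ ⇑f :=
      funext fun i => by simp [Equiv.Perm.mul_apply]
    have hsign : ((Equiv.Perm.sign (Equiv.swap x y * f) : ℤˣ) : ℤ)
        = - ((Equiv.Perm.sign f : ℤˣ) : ℤ) := by
      rw [map_mul, Equiv.Perm.sign_swap hxy]
      simp
    have hg1 : br a + br (a ∘ Equiv.swap x y) ∈ Bsub n :=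
      Submodule.subset_span (Or.inr ⟨k, a, x, y, hxy, rfl⟩)
    have hg2 := ih (a ∘ ⇑(Equiv.swap x y))
    have hmem := Submodule.sub_mem _ hg1 hg2
    have heq : br a - ((Equiv.Perm.sign (Equiv.swap x y * f) : ℤˣ) : ℤ) •
          br (a ∘ ⇑(Equiv.swap x y * f))
        = (br a + br (a ∘ Equiv.swap x y)) -
          (br (a ∘ ⇑(Equiv.swap x y)) -
            ((Equiv.Perm.sign f : ℤˣ) : ℤ) • br ((a ∘ ⇑(Equiv.swap x y)) ∘ ⇑f)) := by
      rw [hcomp, hsign]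
      module
    rw [heq]
    exact hmem

/-- **Lemma 2 (v)**: `Z/B` is a free `ℤ`-module freely generated by the images of the
monomials `[a_1,…,a_k]` with `0 ≤ a_1 < a_2 < ⋯ < a_k ≤ n−1`: these images span `Z/B`
(i.e. `Z ≤ B ⊔ span ŵ`), and they are `ℤ`-linearly independent modulo `B`. -/
theorem Z_mod_B_free (n : ℕ) (hn : 0 < n) :
    Zsub ≤ Bsub n ⊔ Submodule.span ℤ (Set.range fun p : HatIdx n => br p.1.2) ∧
    LinearIndependent ℤ
      (fun p : HatIdx n => (Submodule.Quotient.mk (br p.1.2) : W ⧸ Bsub n)) := by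
  constructor
  · rw [Zsub, Submodule.span_le]
    rintro w ⟨l, hl, rfl⟩
    have hw : (l.map (FreeAlgebra.ι ℤ)).prod = brW ((parseW l).1 :: (parseW l).2) := by
      rw [brW_word _ (by simp), wordOf_parseW l]
    set L : List ℕ := (parseW l).1 :: (parseW l).2 with hL
    have hbr : brW L = br (L.get) := by rw [br_eq_brW, List.ofFn_get]
    rw [SetLike.mem_coe, hw, hbr]
    have hk : 0 < L.length := by simp [hL]
    by_cases h1 : ∃ x ∈ L, n ≤ x
    · obtain ⟨x, hxL, hx⟩ := h1
      obtain ⟨i, hi⟩ := List.mem_iff_get.1 hxL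
      exact Submodule.mem_sup_left (Submodule.subset_span
        (Or.inl ⟨L.length, L.get, hk, Or.inl ⟨i, hi ▸ hx⟩, rfl⟩))
    by_cases h2 : L.Nodup
    swap
    · rw [List.nodup_iff_injective_get] at h2
      unfold Function.Injective at h2
      push_neg at h2
      obtain ⟨i, j, hval, hne⟩ := h2
      exact Submodule.mem_sup_left (Submodule.subset_span
        (Or.inl ⟨L.length, L.get, hk, Or.inr ⟨i, j, hne, hval⟩, rfl⟩))
    · push_neg at h1
      have hinj : Function.Injective L.get := List.nodup_iff_injective_get.1 h2
      set a := L.get with ha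
      set σ := Tuple.sort a with hσ
      set b := a ∘ ⇑σ with hb
      have hsm : StrictMono b :=
        (Tuple.monotone_sort a).strictMono_of_injective (hinj.comp σ.injective)
      have hbn : ∀ i, b i < n := fun i => h1 _ (List.get_mem L _)
      have hnz : 1 < L.length ∨ ∃ i, 0 < b i := by
        rcases lt_or_ge 1 L.length with h | h
        · exact Or.inl h
        · right
          have h2nil : (parseW l).2 = [] := by
            have : L.length ≤ 1 := h
            rw [hL] at this
            simpa using this
          have hpos : 0 < (parseW l).1 := parseW_ne_nil l hl h2nil
          refine ⟨σ⁻¹ ⟨0, hk⟩, ?_⟩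
          have : b (σ⁻¹ ⟨0, hk⟩) = a ⟨0, hk⟩ := by
            rw [hb]
            simp
          rw [this]
          exact hpos
      set p : HatIdx n := ⟨⟨L.length, b⟩, hk, hsm, hbn, hnz⟩ with hp
      have hmem1 : br a - ((Equiv.Perm.sign σ : ℤˣ) : ℤ) • br b ∈ Bsub n :=
        br_sub_sign_smul_mem n σ a
      have hmem2 : ((Equiv.Perm.sign σ : ℤˣ) : ℤ) • br b ∈
          Submodule.span ℤ (Set.range fun p : HatIdx n => br p.1.2) :=
        Submodule.smul_mem _ _ (Submodule.subset_span ⟨p, rfl⟩)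
      have hsplit : br a = (br a - ((Equiv.Perm.sign σ : ℤˣ) : ℤ) • br b)
          + ((Equiv.Perm.sign σ : ℤˣ) : ℤ) • br b := by
        rw [sub_add_cancel]
      rw [hsplit]
      exact Submodule.add_mem _ (Submodule.mem_sup_left hmem1) (Submodule.mem_sup_right hmem2)
  · set ψ : (W ⧸ Bsub n) →ₗ[ℤ] FM := (Bsub n).liftQ (phiF n) (Bsub_le_ker n) with hψ
    set g : HatIdx n → List ℕ := fun p => List.ofFn p.1.2 with hg
    have ginj : Function.Injective g := by
      rintro ⟨⟨k, a⟩, hp⟩ ⟨⟨k', a'⟩, hq⟩ h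
      simp only [hg] at h
      have hk : k = k' := by
        have := congrArg List.length h
        simpa using this
      subst hk
      have : a = a' := List.ofFn_inj.1 h
      subst this
      rfl
    have hcomp : ∀ p : HatIdx n,
        ψ (Submodule.Quotient.mk (br p.1.2)) = Finsupp.single (g p) 1 := by
      intro p
      rw [hψ, Submodule.liftQ_apply, phiF_br n _ p.2.1, VF_sorted]
      · exact List.pairwise_ofFn.2 fun i j h => p.2.2.1 h
      · intro y hy
        obtain ⟨i, rfl⟩ := List.mem_ofFn.1 hy
        exact p.2.2.2.1 i
    have hli : LinearIndependent ℤ fun p : HatIdx n => (Finsupp.single (g p) 1 : FM) := by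
      have := (Finsupp.basisSingleOne (ι := List ℕ) (R := ℤ)).linearIndependent.comp g ginj
      convert this
      · simp [Finsupp.coe_basisSingleOne]
      · exact Subsingleton.elim _ _
    apply LinearIndependent.of_comp ψ
    have : (⇑ψ ∘ fun p : HatIdx n => (Submodule.Quotient.mk (br p.1.2) : W ⧸ Bsub n))
        = fun p : HatIdx n => (Finsupp.single (g p) 1 : FM) := funext fun p => hcomp p
    rw [this]
    exact hli

end AlgBridge
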